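/- If G is a claw-free graph of order n with minimum degree δ, then α(G) ≤ 2n/(δ+2). -/
import Mathlib


open Finset

variable {V : Type*}

/-- A finset is independent in `G` : no two of its vertices are adjacent. -/
def IsIndepFinset (G : SimpleGraph V) (S : Finset V) : Prop :=
  ∀ u ∈ S, ∀ v ∈ S, ¬ G.Adj u v

/-- A finset dominates `G` : every vertex outside it has a neighbour inside it. -/
def IsDomFinset (G : SimpleGraph V) (D : Finset V) : Prop :=
  ∀ v, v ∉ D → ∃ u ∈ D, G.Adj u v

/-- The independence number of `G`. -/
noncomputable def indepNum [Fintype V] (G : SimpleGraph V) : ℕ :=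
  sSup {n | ∃ S : Finset V, IsIndepFinset G S ∧ S.card = n}

/-- The domination number of `G`. -/
noncomputable def domNum [Fintype V] (G : SimpleGraph V) : ℕ :=
  sInf {n | ∃ D : Finset V, IsDomFinset G D ∧ D.card = n}

/-- `G` is `K_{1,r}`-free: no vertex has `r` pairwise nonadjacent neighbours. -/
def K1rFree (G : SimpleGraph V) (r : ℕ) : Prop :=
  ¬ ∃ (v : V) (A : Finset V), (∀ a ∈ A, G.Adj v a) ∧
      (∀ a ∈ A, ∀ b ∈ A, a ≠ b → ¬ G.Adj a b) ∧ A.card = r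

/-- In a claw-free graph of order n and minimum degree δ, α(G) ≤ 2n/(δ+2),
i.e. (δ+2)·α(G) ≤ 2n. -/
theorem stmt5 [Fintype V] [Nonempty V] (G : SimpleGraph V) [DecidableRel G.Adj]
    (hG : K1rFree G 3) :
    (G.minDegree + 2) * indepNum G ≤ 2 * Fintype.card V := by
  classical
  -- obtain a maximum independent set
  have hne : ({n | ∃ S : Finset V, IsIndepFinset G S ∧ S.card = n} : Set ℕ).Nonempty :=
    ⟨0, ∅, by simp [IsIndepFinset], by simp⟩
  have hbdd : BddAbove {n | ∃ S : Finset V, IsIndepFinset G S ∧ S.card = n} := by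
    refine ⟨Fintype.card V, ?_⟩
    rintro n ⟨S, -, rfl⟩
    exact S.card_le_univ
  obtain ⟨S, hSindep, hScard⟩ := Nat.sSup_mem hne hbdd
  -- neighbours of vertices of S lie outside S
  have hnbr : ∀ v ∈ S, Sᶜ.filter (G.Adj v) = G.neighborFinset v := by
    intro v hv
    ext u
    simp only [mem_filter, mem_compl, SimpleGraph.mem_neighborFinset]
    refine ⟨fun h => h.2, fun h => ⟨fun hu => hSindep v hv u hu h, h⟩⟩
  -- double counting
  have key : ∑ v ∈ S, (Sᶜ.filter (G.Adj v)).card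
      = ∑ u ∈ Sᶜ, (S.filter (fun v => G.Adj v u)).card := by
    simp only [Finset.card_filter]
    exact Finset.sum_comm
  -- lower bound
  have hlow : G.minDegree * S.card ≤ ∑ v ∈ S, (Sᶜ.filter (G.Adj v)).card := by
    have h := Finset.card_nsmul_le_sum S (fun v => (Sᶜ.filter (G.Adj v)).card)
      G.minDegree (fun v hv => by
        show G.minDegree ≤ (Sᶜ.filter (G.Adj v)).card
        rw [hnbr v hv, SimpleGraph.card_neighborFinset_eq_degree]
        exact G.minDegree_le_degree v)
    simpa [smul_eq_mul, mul_comm] using h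
  -- upper bound : each outside vertex has at most 2 neighbours in S
  have hup : ∀ u ∈ Sᶜ, (S.filter (fun v => G.Adj v u)).card ≤ 2 := by
    intro u hu
    by_contra h
    push_neg at h
    obtain ⟨A, hA, hA3⟩ := Finset.exists_subset_card_eq h
    exact hG ⟨u, A, fun a ha => ((mem_filter.mp (hA ha)).2).symm,
      fun a ha b hb hab => hSindep a (mem_filter.mp (hA ha)).1 b (mem_filter.mp (hA hb)).1,
      hA3⟩
  have hsum : ∑ u ∈ Sᶜ, (S.filter (fun v => G.Adj v u)).card ≤ 2 * Sᶜ.card := by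
    calc ∑ u ∈ Sᶜ, (S.filter (fun v => G.Adj v u)).card ≤ ∑ _u ∈ Sᶜ, 2 :=
      Finset.sum_le_sum hup
    _ = 2 * Sᶜ.card := by rw [Finset.sum_const, smul_eq_mul, mul_comm]
  have hcardc : Sᶜ.card = Fintype.card V - S.card := by
    rw [Finset.card_compl]
  have hle : S.card ≤ Fintype.card V := S.card_le_univ
  have main : G.minDegree * S.card ≤ 2 * (Fintype.card V - S.card) := by
    calc G.minDegree * S.card ≤ ∑ v ∈ S, (Sᶜ.filter (G.Adj v)).card := hlow
    _ = ∑ u ∈ Sᶜ, (S.filter (fun v => G.Adj v u)).card := key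
    _ ≤ 2 * Sᶜ.card := hsum
    _ = 2 * (Fintype.card V - S.card) := by rw [hcardc]
  rw [indepNum, ← hScard]
  have : (G.minDegree + 2) * S.card = G.minDegree * S.card + 2 * S.card := by ring
  rw [this]
  omega
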